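/- arXiv:1806.06097 — 5 statements merged into one kernel-verified Lean document; each statement's English description precedes it below -/
import Mathlib

section
/- Let F be an infinite field and let P ∈ F[X_1,...,X_N] be a polynomial of degree at most d expressed as P = C(Q_1,...,Q_t) for some C ∈ F[Y_1,...,Y_t] and polynomials Q_j ∈ F[X_1,...,X_N]. Then for every ℓ with 0 ≤ ℓ ≤ d, the degree-ℓ homogeneous component of P can be written as a sum of d+1 terms, the i-th of which is of the form C'_{ℓ,i}(Q'_{i1},...,Q'_{it}) where each Q'_{ij} is an F-scalar multiple of a scaled version of Q_j (namely Q_j with each variable X_m replaced by c_i·X_m for some c_i ∈ F); in particular each Q'_{ij} has degree at most deg(Q_j), and for each i the algebraic rank of {Q'_{ij} : j ∈ [t]} is at most the algebraic rank of {Q_j : j ∈ [t]}. -/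
open MvPolynomial

lemma aeval_smulX_monomial {F : Type*} [CommSemiring F] {N : ℕ} (c : F) (u : Fin N →₀ ℕ)
    (a : F) :
    MvPolynomial.aeval (fun m => c • (MvPolynomial.X m : MvPolynomial (Fin N) F))
      (MvPolynomial.monomial u a) = c ^ (u.sum fun _ n => n) • MvPolynomial.monomial u a := by
  classical
  rw [aeval_monomial, monomial_eq]
  simp only [smul_eq_C_mul, mul_pow, algebraMap_eq, ← map_pow]
  rw [Finsupp.prod, Finsupp.prod, Finsupp.sum, Finset.prod_mul_distrib, ← map_prod,
    Finset.prod_pow_eq_pow_sum]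
  ring

lemma aeval_smulX_isHomogeneous {F : Type*} [CommSemiring F] {N : ℕ} (c : F)
    {p : MvPolynomial (Fin N) F} {n : ℕ} (hp : p.IsHomogeneous n) :
    MvPolynomial.aeval (fun m => c • (MvPolynomial.X m : MvPolynomial (Fin N) F)) p
      = c ^ n • p := by
  classical
  conv_lhs => rw [p.as_sum]
  conv_rhs => rw [p.as_sum]
  rw [map_sum, Finset.smul_sum]
  refine Finset.sum_congr rfl fun v hv => ?_
  rw [aeval_smulX_monomial]
  congr 1
  have h : (v.sum fun _ n => n) = n := by
    simpa [Finsupp.weight_apply, Finsupp.sum] using hp (MvPolynomial.mem_support_iff.mp hv)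
  rw [h]

lemma aeval_smulX_eq_sum {F : Type*} [CommSemiring F] {N : ℕ} (c : F)
    (p : MvPolynomial (Fin N) F) {D : ℕ} (hD : p.totalDegree ≤ D) :
    MvPolynomial.aeval (fun m => c • (MvPolynomial.X m : MvPolynomial (Fin N) F)) p
      = ∑ ℓ ∈ Finset.range (D + 1), c ^ ℓ • MvPolynomial.homogeneousComponent ℓ p := by
  have hp : ∑ ℓ ∈ Finset.range (D + 1), MvPolynomial.homogeneousComponent ℓ p = p := by
    calc ∑ ℓ ∈ Finset.range (D + 1), MvPolynomial.homogeneousComponent ℓ p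
        = ∑ ℓ ∈ Finset.range (p.totalDegree + 1), MvPolynomial.homogeneousComponent ℓ p := by
          refine (Finset.sum_subset ?_ ?_).symm
          · intro x hx; simp only [Finset.mem_range] at *; omega
          · intro x _ hx
            simp only [Finset.mem_range, not_lt] at hx
            exact MvPolynomial.homogeneousComponent_eq_zero _ _ (by omega)
      _ = p := MvPolynomial.sum_homogeneousComponent p
  conv_lhs => rw [← hp]
  rw [map_sum]
  exact Finset.sum_congr rfl fun ℓ _ =>
    aeval_smulX_isHomogeneous c (homogeneousComponent_isHomogeneous ℓ p)

/-- A family of polynomials is algebraically dependent over `F`. -/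
def AlgDep (F : Type*) [Field F] {N : ℕ} {ι : Type*}
    (Q : ι → MvPolynomial (Fin N) F) : Prop :=
  ∃ R : MvPolynomial ι F, R ≠ 0 ∧ MvPolynomial.aeval Q R = 0

/-- The algebraic rank of a family of polynomials is at most `k`:
every subfamily of size larger than `k` is algebraically dependent. -/
def AlgRankLE (F : Type*) [Field F] {N t : ℕ}
    (Q : Fin t → MvPolynomial (Fin N) F) (k : ℕ) : Prop :=
  ∀ S : Finset (Fin t), k < S.card → AlgDep F (fun j : S => Q j)

/-- Interpolation of homogeneous components: if `P = C(Q_1, …, Q_t)` has degree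
at most `d`, then each homogeneous component `h^ℓ[P]` (for `0 ≤ ℓ ≤ d`) is a sum
of `d+1` terms, the `i`-th of which is a polynomial function `C'_{ℓ,i}` of the
polynomials `Q'_{ij} = s_{ij} • Q_j(c_i • X)`; in particular each `Q'_{ij}` has
degree at most `deg Q_j`, and for each `i` the algebraic rank of
`{Q'_{ij} : j}` is at most the algebraic rank of `{Q_j : j}`. -/
theorem homogeneousComponent_of_composition {F : Type*} [Field F] [Infinite F]
    {N t d : ℕ} (P : MvPolynomial (Fin N) F) (C : MvPolynomial (Fin t) F)
    (Q : Fin t → MvPolynomial (Fin N) F)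
    (hP : P = MvPolynomial.aeval Q C) (hdeg : P.totalDegree ≤ d) :
    ∀ ℓ ≤ d, ∃ c : Fin (d + 1) → F, ∃ s : Fin (d + 1) → Fin t → F,
      ∃ C' : Fin (d + 1) → MvPolynomial (Fin t) F,
      (MvPolynomial.homogeneousComponent ℓ P =
          ∑ i : Fin (d + 1), MvPolynomial.aeval
            (fun j => s i j • MvPolynomial.aeval
              (fun m => c i • (MvPolynomial.X m : MvPolynomial (Fin N) F)) (Q j))
            (C' i)) ∧
      (∀ i : Fin (d + 1), ∀ j : Fin t,
          (s i j • MvPolynomial.aeval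
            (fun m => c i • (MvPolynomial.X m : MvPolynomial (Fin N) F))
              (Q j)).totalDegree ≤ (Q j).totalDegree) ∧
      (∀ i : Fin (d + 1), ∀ k : ℕ, AlgRankLE F Q k →
          AlgRankLE F (fun j => s i j • MvPolynomial.aeval
            (fun m => c i • (MvPolynomial.X m : MvPolynomial (Fin N) F)) (Q j)) k) := by
  intro ℓ hℓ
  classical
  set e := Infinite.natEmbedding F with he
  set c : Fin (d + 1) → F := fun i => e i with hc
  have hcinj : Function.Injective c := fun a b hab => Fin.val_injective (e.injective hab)
  set V := Matrix.vandermonde c with hV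
  have hdet : IsUnit V.det :=
    (Matrix.det_vandermonde_ne_zero_iff.mpr hcinj).isUnit
  set ℓF : Fin (d + 1) := ⟨ℓ, by omega⟩ with hℓF
  set w : Fin (d + 1) → F := fun i => V⁻¹ ℓF i with hw
  have hkey : ∀ ℓ' : Fin (d + 1),
      (∑ i, w i * c i ^ (ℓ' : ℕ)) = if ℓF = ℓ' then (1 : F) else 0 := by
    intro ℓ'
    have h := congrFun (congrFun (Matrix.nonsing_inv_mul V hdet) ℓF) ℓ'
    simpa [Matrix.mul_apply, Matrix.one_apply, hw, hV, Matrix.vandermonde_apply] using h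
  refine ⟨c, fun _ _ => 1, fun i => MvPolynomial.C (w i) * C, ?_, ?_, ?_⟩
  · have hσP : ∀ i : Fin (d + 1),
        MvPolynomial.aeval
          (fun j => (1 : F) • MvPolynomial.aeval
            (fun m => c i • (MvPolynomial.X m : MvPolynomial (Fin N) F)) (Q j))
          (MvPolynomial.C (w i) * C)
        = w i • MvPolynomial.aeval
            (fun m => c i • (MvPolynomial.X m : MvPolynomial (Fin N) F)) P := by
      intro i
      simp only [one_smul, map_mul, MvPolynomial.aeval_C, MvPolynomial.algebraMap_eq]
      rw [hP, ← MvPolynomial.comp_aeval_apply, ← MvPolynomial.smul_eq_C_mul]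
    calc MvPolynomial.homogeneousComponent ℓ P
        = ∑ ℓ' : Fin (d + 1), (if ℓF = ℓ' then (1 : F) else 0) •
            MvPolynomial.homogeneousComponent (ℓ' : ℕ) P := by
          symm
          simp [ite_smul]
          rfl
      _ = ∑ ℓ' : Fin (d + 1), (∑ i, w i * c i ^ (ℓ' : ℕ)) •
            MvPolynomial.homogeneousComponent (ℓ' : ℕ) P := by
          simp_rw [hkey]
      _ = ∑ ℓ' : Fin (d + 1), ∑ i, (w i * c i ^ (ℓ' : ℕ)) •
            MvPolynomial.homogeneousComponent (ℓ' : ℕ) P := by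
          simp_rw [Finset.sum_smul]
      _ = ∑ i, ∑ ℓ' : Fin (d + 1), (w i * c i ^ (ℓ' : ℕ)) •
            MvPolynomial.homogeneousComponent (ℓ' : ℕ) P := Finset.sum_comm
      _ = ∑ i, w i • MvPolynomial.aeval
            (fun m => c i • (MvPolynomial.X m : MvPolynomial (Fin N) F)) P := by
          refine Finset.sum_congr rfl fun i _ => ?_
          rw [aeval_smulX_eq_sum (c i) P hdeg, Finset.smul_sum,
            ← Fin.sum_univ_eq_sum_range]
          simp_rw [smul_smul]
      _ = _ := by
          exact Finset.sum_congr rfl fun i _ => (hσP i).symm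
  · intro i j
    rw [one_smul, aeval_smulX_eq_sum (c i) (Q j) le_rfl]
    refine (MvPolynomial.totalDegree_finset_sum _ _).trans (Finset.sup_le fun x hx => ?_)
    refine (MvPolynomial.totalDegree_smul_le _ _).trans ?_
    refine ((MvPolynomial.homogeneousComponent_isHomogeneous x (Q j)).totalDegree_le).trans ?_
    simp only [Finset.mem_range] at hx; omega
  · intro i k hk S hS
    obtain ⟨R, hR0, hRz⟩ := hk S hS
    refine ⟨R, hR0, ?_⟩
    simp only [one_smul]
    rw [show (fun j : S => MvPolynomial.aeval
        (fun m => c i • (MvPolynomial.X m : MvPolynomial (Fin N) F)) (Q j))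
      = fun j : S => MvPolynomial.aeval
        (fun m => c i • (MvPolynomial.X m : MvPolynomial (Fin N) F)) ((fun j : S => Q j) j)
      from rfl, ← MvPolynomial.comp_aeval_apply, hRz, map_zero]
end

section
/- Let F be a field of characteristic zero, and let P ∈ F[X_1,...,X_N,Y] be a nonzero polynomial of Y-degree at most k, written as P = Σ_{i=0}^{k} C_i(X_1,...,X_N)·Y^i. Suppose f ∈ F[X_1,...,X_N] satisfies P(X_1,...,X_N,f) = 0 and (∂P/∂Y)(0,...,0,f(0,...,0)) ≠ 0. Then for every t ≥ 0 there exists a polynomial R_t ∈ F[Z_1,...,Z_{k+1}] of degree at most t such that h^{≤t}[f] = h^{≤t}[R_t(C_0, C_1, ..., C_k)], where h^{≤t}[g] denotes the sum of homogeneous components of g of degree at most t. -/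
open MvPolynomial Polynomial

namespace DSY

variable {F : Type*} [Field F] {σ : Type*}

lemma degree_add (a b : σ →₀ ℕ) : (a + b).degree = a.degree + b.degree := by
  classical
  show (a + b).sum (fun _ n => n) = a.sum (fun _ n => n) + b.sum (fun _ n => n)
  exact Finsupp.sum_add_index' (fun _ => rfl) (fun _ _ _ => rfl)

/-- The ideal of polynomials all of whose coefficients in degrees `≤ t` vanish. -/
noncomputable def J (t : ℕ) : Ideal (MvPolynomial σ F) where
  carrier := {p | ∀ d : σ →₀ ℕ, d.degree ≤ t → coeff d p = 0}
  zero_mem' := by intro d _; simp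
  add_mem' := by
    intro p q hp hq d hd
    simp [MvPolynomial.coeff_add, hp d hd, hq d hd]
  smul_mem' := by
    classical
    intro r p hp d hd
    rw [smul_eq_mul, MvPolynomial.coeff_mul]
    apply Finset.sum_eq_zero
    rintro ⟨d1, d2⟩ hmem
    rw [Finset.HasAntidiagonal.mem_antidiagonal] at hmem
    have h2 : d2.degree ≤ t := by
      have := degree_add d1 d2
      rw [hmem] at this
      omega
    rw [hp d2 h2, mul_zero]

lemma mem_J {t : ℕ} {p : MvPolynomial σ F} :
    p ∈ (J t : Ideal (MvPolynomial σ F)) ↔ ∀ d : σ →₀ ℕ, d.degree ≤ t → coeff d p = 0 :=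
  Iff.rfl

lemma J_mul {s s' : ℕ} {p q : MvPolynomial σ F} (hp : p ∈ (J s : Ideal (MvPolynomial σ F)))
    (hq : q ∈ (J s' : Ideal (MvPolynomial σ F))) : p * q ∈ (J (s + s' + 1) : Ideal (MvPolynomial σ F)) := by
  classical
  intro d hd
  rw [MvPolynomial.coeff_mul]
  apply Finset.sum_eq_zero
  rintro ⟨d1, d2⟩ hmem
  rw [Finset.HasAntidiagonal.mem_antidiagonal] at hmem
  have hsum : d1.degree + d2.degree ≤ s + s' + 1 := by
    have := degree_add d1 d2; rw [hmem] at this; omega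
  by_cases h1 : d1.degree ≤ s
  · rw [hp d1 h1, zero_mul]
  · rw [hq d2 (by omega), mul_zero]

lemma J_antitone {s s' : ℕ} (h : s ≤ s') :
    (J s' : Ideal (MvPolynomial σ F)) ≤ J s :=
  fun _ hp d hd => hp d (hd.trans h)

lemma pow_J : ∀ m : ℕ, (J 0 : Ideal (MvPolynomial σ F)) ^ (m + 1) ≤ J m
  | 0 => by rw [pow_one]
  | m + 1 => by
    rw [pow_succ]
    refine Ideal.mul_le.mpr fun r hr s hs => ?_
    have := J_mul (pow_J m hr) hs
    simpa using this

lemma prod_mem_pow {ι : Type*} [DecidableEq ι] (D : ι → MvPolynomial σ F)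
    (hD : ∀ i, D i ∈ (J 0 : Ideal (MvPolynomial σ F))) (s : Finset ι) (e : ι → ℕ) :
    (∏ i ∈ s, D i ^ e i) ∈ (J 0 : Ideal (MvPolynomial σ F)) ^ (∑ i ∈ s, e i) := by
  induction s using Finset.induction with
  | empty => simp [Ideal.one_eq_top]
  | insert _ _ h ih =>
    rw [Finset.prod_insert h, Finset.sum_insert h, pow_add]
    exact Ideal.mul_mem_mul (Ideal.pow_mem_pow (hD _) _) ih

lemma aeval_mem_J {ι : Type*} (D : ι → MvPolynomial σ F)
    (hD : ∀ i, D i ∈ (J 0 : Ideal (MvPolynomial σ F))) (V : MvPolynomial ι F) {n : ℕ}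
    (hV : ∀ d ∈ V.support, n + 1 ≤ d.degree) :
    aeval D V ∈ (J n : Ideal (MvPolynomial σ F)) := by
  classical
  rw [V.as_sum, map_sum]
  refine Ideal.sum_mem _ fun d hd => ?_
  rw [MvPolynomial.aeval_monomial]
  refine Ideal.mul_mem_left _ _ ?_
  have h1 : (d.prod fun i m => D i ^ m) ∈ (J 0 : Ideal (MvPolynomial σ F)) ^ d.degree :=
    prod_mem_pow D hD d.support d
  exact (le_trans (Ideal.pow_le_pow_right (hV d hd)) (pow_J n)) h1

/-- Truncation to total degree `≤ t`. -/
noncomputable def trunc (t : ℕ) (p : MvPolynomial σ F) : MvPolynomial σ F :=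
  ∑ j ∈ Finset.range (t + 1), homogeneousComponent j p

lemma coeff_trunc (t : ℕ) (p : MvPolynomial σ F) (d : σ →₀ ℕ) :
    coeff d (trunc t p) = if d.degree ≤ t then coeff d p else 0 := by
  classical
  rw [trunc, MvPolynomial.coeff_sum]
  simp_rw [coeff_homogeneousComponent]
  rw [Finset.sum_ite_eq (Finset.range (t + 1)) d.degree (fun _ => coeff d p)]
  simp [Nat.lt_succ_iff]

lemma trunc_eq_iff (t : ℕ) (p q : MvPolynomial σ F) :
    trunc t p = trunc t q ↔ p - q ∈ (J t : Ideal (MvPolynomial σ F)) := by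
  constructor
  · intro h d hd
    have := congrArg (MvPolynomial.coeff d) h
    rw [coeff_trunc, coeff_trunc, if_pos hd, if_pos hd] at this
    rw [MvPolynomial.coeff_sub, this, sub_self]
  · intro h
    ext d
    rw [coeff_trunc, coeff_trunc]
    split_ifs with hle
    · have := h d hle
      rw [MvPolynomial.coeff_sub, sub_eq_zero] at this
      exact this
    · rfl

lemma totalDegree_trunc_le (t : ℕ) (p : MvPolynomial σ F) : (trunc t p).totalDegree ≤ t := by
  refine le_trans (totalDegree_finset_sum _ _) (Finset.sup_le fun j hj => ?_)
  refine le_trans ((homogeneousComponent_isHomogeneous j p).totalDegree_le) ?_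
  exact Nat.lt_succ_iff.mp (Finset.mem_range.mp hj)

lemma sub_trunc_support (n : ℕ) (V : MvPolynomial σ F) :
    ∀ d ∈ (V - trunc n V).support, n + 1 ≤ d.degree := by
  intro d hd
  rw [MvPolynomial.mem_support_iff] at hd
  by_contra h
  push_neg at h
  exact hd (by rw [MvPolynomial.coeff_sub, coeff_trunc, if_pos (by omega), sub_self])

lemma geom (c : F) (hc : c ≠ 0) (v : MvPolynomial σ F) (m : ℕ) :
    (MvPolynomial.C c + v) * ∑ j ∈ Finset.range (m + 1), MvPolynomial.C ((-1) ^ j / c ^ (j + 1)) * v ^ j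
      = 1 - MvPolynomial.C ((-1) ^ (m + 1) / c ^ (m + 1)) * v ^ (m + 1) := by
  induction m with
  | zero =>
    rw [Finset.range_one, Finset.sum_singleton]
    rw [show ((-1 : F) ^ 0 / c ^ (0 + 1)) = 1 / c by norm_num,
      show ((-1 : F) ^ (0 + 1) / c ^ (0 + 1)) = -(1 / c) by rw [pow_one, pow_one]; ring,
      map_neg, pow_zero, pow_one]
    have hcc : MvPolynomial.C c * MvPolynomial.C (1 / c) = (1 : MvPolynomial σ F) := by
      rw [← MvPolynomial.C_mul]
      field_simp
      exact MvPolynomial.C_1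
    rw [mul_one, add_mul, hcc]
    ring
  | succ m ih =>
    rw [Finset.sum_range_succ, mul_add, ih]
    have hcB : c * ((-1 : F) ^ (m + 1) / c ^ (m + 2)) = (-1) ^ (m + 1) / c ^ (m + 1) := by
      field_simp
      ring
    have key : (MvPolynomial.C c + v) * (MvPolynomial.C ((-1 : F) ^ (m + 1) / c ^ (m + 2)) * v ^ (m + 1))
        = MvPolynomial.C ((-1) ^ (m + 1) / c ^ (m + 1)) * v ^ (m + 1)
          + MvPolynomial.C ((-1) ^ (m + 1) / c ^ (m + 2)) * v ^ (m + 2) := by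
      rw [add_mul, ← mul_assoc, ← MvPolynomial.C_mul, hcB]
      ring
    rw [key]
    have hneg : ((-1 : F)) ^ (m + 2) / c ^ (m + 2) = -((-1) ^ (m + 1) / c ^ (m + 2)) := by
      rw [pow_succ (-1 : F) (m + 1)]
      ring
    rw [hneg, map_neg]
    ring

lemma totalDegree_aeval_le {ι : Type*} (g : ι → MvPolynomial σ F)
    (hg : ∀ i, (g i).totalDegree ≤ 1) (W : MvPolynomial ι F) :
    (aeval g W).totalDegree ≤ W.totalDegree := by
  classical
  conv_lhs => rw [W.as_sum]
  rw [map_sum]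
  refine le_trans (totalDegree_finset_sum _ _) (Finset.sup_le fun d hd => ?_)
  rw [MvPolynomial.aeval_monomial]
  refine le_trans (totalDegree_mul _ _) ?_
  have h0 : (algebraMap F (MvPolynomial σ F) (coeff d W)).totalDegree = 0 := by
    rw [MvPolynomial.algebraMap_eq]; exact totalDegree_C _
  have h1 : (d.prod fun i m => g i ^ m).totalDegree ≤ d.degree := by
    refine le_trans (totalDegree_finset_prod _ _) ?_
    refine le_trans (Finset.sum_le_sum fun i _ => le_trans (totalDegree_pow _ _)
      (Nat.mul_le_mul_left _ (hg i))) ?_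
    simp [Finsupp.degree]
    exact le_rfl
  rw [h0, zero_add]
  exact le_trans h1 (le_totalDegree hd)

end DSY


/-- The Dvir–Shpilka–Yehudayoff root-expressibility lemma: if
`P = Σ_{i=0}^k C_i·Y^i` is nonzero of `Y`-degree at most `k`, `f` is a root of
`P` in `Y`, and `∂P/∂Y` does not vanish at `(0, …, 0, f(0, …, 0))`, then for
every `t ≥ 0` there is a polynomial `R_t` in `k+1` variables of degree at most
`t` with `h^{≤t}[f] = h^{≤t}[R_t(C_0, …, C_k)]`. -/
theorem dvir_shpilka_yehudayoff_root {F : Type*} [Field F] [CharZero F] {N k : ℕ}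
    (P : Polynomial (MvPolynomial (Fin N) F)) (hP : P ≠ 0) (hdeg : P.natDegree ≤ k)
    (f : MvPolynomial (Fin N) F) (hroot : Polynomial.eval f P = 0)
    (hderiv : Polynomial.eval (MvPolynomial.eval (fun _ : Fin N => (0 : F)) f)
        (Polynomial.map (MvPolynomial.eval (fun _ : Fin N => (0 : F)))
          (Polynomial.derivative P)) ≠ 0) :
    ∀ t : ℕ, ∃ R : MvPolynomial (Fin (k + 1)) F, R.totalDegree ≤ t ∧
      (∑ j ∈ Finset.range (t + 1), MvPolynomial.homogeneousComponent j f) =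
        ∑ j ∈ Finset.range (t + 1), MvPolynomial.homogeneousComponent j
          (MvPolynomial.aeval (fun i : Fin (k + 1) => P.coeff i) R) := by
  classical
  intro t
  -- rewrite the evaluation at 0 as `constantCoeff`
  rw [MvPolynomial.eval_zero'] at hderiv
  -- the constant terms of the coefficients
  set a : ℕ → F := fun i => MvPolynomial.constantCoeff (P.coeff i) with ha
  set D : Fin (k + 1) → MvPolynomial (Fin N) F :=
    fun i => P.coeff i - MvPolynomial.C (a i) with hD_def
  have hD : ∀ i, D i ∈ (DSY.J 0 : Ideal (MvPolynomial (Fin N) F)) := by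
    intro i d hd
    have hd0 : d = 0 := by
      rwa [Nat.le_zero, Finsupp.degree_eq_zero_iff] at hd
    subst hd0
    rw [hD_def]
    simp only [MvPolynomial.coeff_sub]
    rw [← MvPolynomial.constantCoeff_eq]
    simp [ha]
  -- the value of the derivative at the origin
  set c : F := Polynomial.eval (MvPolynomial.constantCoeff f)
    (Polynomial.map (MvPolynomial.constantCoeff :
      MvPolynomial (Fin N) F →+* F) (Polynomial.derivative P)) with hc_def
  have hc : c ≠ 0 := hderiv
  -- `k ≥ 1`
  have hk1 : 1 ≤ k := by
    by_contra h
    push_neg at h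
    have hk0 : k = 0 := by omega
    have : Polynomial.derivative P = 0 := by
      rw [Polynomial.eq_C_of_natDegree_le_zero (hdeg.trans hk0.le)]
      simp
    apply hc
    rw [hc_def, this]
    simp
  -- the key induction
  have key : ∀ s : ℕ, ∃ W : MvPolynomial (Fin (k + 1)) F,
      W.totalDegree ≤ s ∧ f - MvPolynomial.aeval D W ∈
        (DSY.J s : Ideal (MvPolynomial (Fin N) F)) := by
    intro s
    induction s with
    | zero =>
      refine ⟨MvPolynomial.C (MvPolynomial.constantCoeff f), ?_, ?_⟩
      · simp
      · intro d hd
        have hd0 : d = 0 := by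
          rwa [Nat.le_zero, Finsupp.degree_eq_zero_iff] at hd
        subst hd0
        rw [MvPolynomial.coeff_sub, ← MvPolynomial.constantCoeff_eq]
        simp
    | succ t ih =>
      obtain ⟨W, hWdeg, hWJ⟩ := ih
      set g : MvPolynomial (Fin N) F := MvPolynomial.aeval D W with hg_def
      set e : MvPolynomial (Fin N) F := f - g with he_def
      have hg0 : MvPolynomial.constantCoeff g = MvPolynomial.constantCoeff f := by
        have h2 := hWJ 0 (by simp)
        rw [he_def, MvPolynomial.coeff_sub, sub_eq_zero] at h2
        rw [MvPolynomial.constantCoeff_eq]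
        exact h2.symm
      -- the polynomial `S` representing `P.eval g`
      set S : MvPolynomial (Fin (k + 1)) F :=
        ∑ i : Fin (k + 1), (MvPolynomial.X i + MvPolynomial.C (a (i : ℕ))) * W ^ (i : ℕ)
        with hS_def
      have hS : MvPolynomial.aeval D S = Polynomial.eval g P := by
        rw [Polynomial.eval_eq_sum_range' (Nat.lt_succ_of_le hdeg) g, hS_def, map_sum,
          ← Fin.sum_univ_eq_sum_range (fun i => P.coeff i * g ^ i)]
        refine Finset.sum_congr rfl fun i _ => ?_
        rw [map_mul, map_pow, map_add, MvPolynomial.aeval_X, MvPolynomial.aeval_C,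
          MvPolynomial.algebraMap_eq, ← hg_def]
        simp only [hD_def]
        ring
      -- the polynomial `T` representing `(derivative P).eval g`
      set T : MvPolynomial (Fin (k + 1)) F :=
        ∑ i : Fin k, MvPolynomial.C (((i : ℕ) : F) + 1) *
          (MvPolynomial.X i.succ + MvPolynomial.C (a ((i : ℕ) + 1))) * W ^ (i : ℕ)
        with hT_def
      have hdlt : (Polynomial.derivative P).natDegree < k :=
        lt_of_le_of_lt ((Polynomial.natDegree_derivative_le P).trans
          (Nat.sub_le_sub_right hdeg 1)) (by omega)
      have hT : MvPolynomial.aeval D T = Polynomial.eval g (Polynomial.derivative P) := by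
        rw [Polynomial.eval_eq_sum_range' hdlt g, hT_def, map_sum,
          ← Fin.sum_univ_eq_sum_range (fun i => (Polynomial.derivative P).coeff i * g ^ i)]
        refine Finset.sum_congr rfl fun i _ => ?_
        rw [Polynomial.coeff_derivative]
        simp only [map_mul, map_pow, map_add, MvPolynomial.aeval_X, MvPolynomial.aeval_C,
          MvPolynomial.algebraMap_eq, ← hg_def, map_natCast, map_one]
        simp only [hD_def, Fin.val_succ]
        push_cast [map_natCast]
        ring
      have hTc : MvPolynomial.constantCoeff (Polynomial.eval g (Polynomial.derivative P))
          = c := by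
        have h1 := Polynomial.eval₂_at_apply (p := Polynomial.derivative P)
          (MvPolynomial.constantCoeff : MvPolynomial (Fin N) F →+* F) g
        rw [Polynomial.eval₂_eq_eval_map] at h1
        rw [← h1, hg0]
      set v : MvPolynomial (Fin N) F :=
        Polynomial.eval g (Polynomial.derivative P) - MvPolynomial.C c with hv_def
      have hv0 : v ∈ (DSY.J 0 : Ideal (MvPolynomial (Fin N) F)) := by
        intro d hd
        have hd0 : d = 0 := by rwa [Nat.le_zero, Finsupp.degree_eq_zero_iff] at hd
        subst hd0
        rw [hv_def, MvPolynomial.coeff_sub, ← MvPolynomial.constantCoeff_eq, hTc,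
          MvPolynomial.constantCoeff_C]
        exact sub_self c
      set U : MvPolynomial (Fin (k + 1)) F :=
        ∑ j ∈ Finset.range (t + 2), MvPolynomial.C ((-1) ^ j / c ^ (j + 1)) *
          (T - MvPolynomial.C c) ^ j with hU_def
      have hTv : MvPolynomial.aeval D (T - MvPolynomial.C c) = v := by
        rw [map_sub, hT, MvPolynomial.aeval_C, MvPolynomial.algebraMap_eq, hv_def]
      have hU : MvPolynomial.aeval D U =
          ∑ j ∈ Finset.range (t + 2), MvPolynomial.C ((-1) ^ j / c ^ (j + 1)) * v ^ j := by
        rw [hU_def, map_sum]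
        refine Finset.sum_congr rfl fun j _ => ?_
        rw [map_mul, map_pow, hTv, MvPolynomial.aeval_C, MvPolynomial.algebraMap_eq]
      have hgeom : Polynomial.eval g (Polynomial.derivative P) * MvPolynomial.aeval D U
          = 1 - MvPolynomial.C ((-1) ^ (t + 2) / c ^ (t + 2)) * v ^ (t + 2) := by
        rw [hU, show Polynomial.eval g (Polynomial.derivative P) = MvPolynomial.C c + v by
          rw [hv_def]; ring]
        exact DSY.geom c hc v (t + 1)
      obtain ⟨q, hq⟩ := Polynomial.binomExpansion P g e
      rw [show g + e = f by rw [he_def]; ring, hroot] at hq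
      set V : MvPolynomial (Fin (k + 1)) F := W - S * U with hV_def
      refine ⟨DSY.trunc (t + 1) V, DSY.totalDegree_trunc_le _ _, ?_⟩
      have htail : MvPolynomial.aeval D (V - DSY.trunc (t + 1) V) ∈
          (DSY.J (t + 1) : Ideal (MvPolynomial (Fin N) F)) :=
        DSY.aeval_mem_J D hD _ (DSY.sub_trunc_support (t + 1) V)
      have htail' : MvPolynomial.aeval D V - MvPolynomial.aeval D (DSY.trunc (t + 1) V) ∈
          (DSY.J (t + 1) : Ideal (MvPolynomial (Fin N) F)) := by
        rwa [map_sub] at htail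
      rw [show f - MvPolynomial.aeval D (DSY.trunc (t + 1) V)
          = (f - MvPolynomial.aeval D V)
            + (MvPolynomial.aeval D V - MvPolynomial.aeval D (DSY.trunc (t + 1) V)) by ring]
      refine Ideal.add_mem _ ?_ htail' 
      have hPg : Polynomial.eval g P
          = -(Polynomial.eval g (Polynomial.derivative P) * e) - q * e ^ 2 := by
        linear_combination -hq
      have hmain : f - MvPolynomial.aeval D V
          = e * (1 - Polynomial.eval g (Polynomial.derivative P) * MvPolynomial.aeval D U)
            - q * e ^ 2 * MvPolynomial.aeval D U := by
        rw [hV_def, map_sub, map_mul, hS, ← hg_def, hPg, he_def]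
        ring
      rw [hmain]
      refine Ideal.sub_mem _ ?_ ?_
      · have h1 : (1 : MvPolynomial (Fin N) F)
            - Polynomial.eval g (Polynomial.derivative P) * MvPolynomial.aeval D U
            = MvPolynomial.C ((-1) ^ (t + 2) / c ^ (t + 2)) * v ^ (t + 2) := by
          rw [hgeom]; ring
        rw [h1]
        exact Ideal.mul_mem_left _ e
          (Ideal.mul_mem_left _ _ (DSY.pow_J (t + 1) (Ideal.pow_mem_pow hv0 (t + 2))))
      · have he2 : e ^ 2 ∈ (DSY.J (t + 1) : Ideal (MvPolynomial (Fin N) F)) := by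
          rw [pow_two]
          exact DSY.J_antitone (by omega) (DSY.J_mul hWJ hWJ)
        exact Ideal.mul_mem_right _ _ (Ideal.mul_mem_left _ q he2)
  -- conclude
  obtain ⟨W, hWdeg, hWJ⟩ := key t
  refine ⟨MvPolynomial.aeval (fun i : Fin (k + 1) =>
      MvPolynomial.X i - MvPolynomial.C (a i)) W, ?_, ?_⟩
  · refine le_trans (DSY.totalDegree_aeval_le _ ?_ W) hWdeg
    intro i
    rw [sub_eq_add_neg]
    refine le_trans (MvPolynomial.totalDegree_add _ _) ?_
    rw [MvPolynomial.totalDegree_neg]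
    simp [MvPolynomial.totalDegree_X, MvPolynomial.totalDegree_C]
  · show DSY.trunc t f = DSY.trunc t _
    rw [DSY.trunc_eq_iff]
    have hcomp : MvPolynomial.aeval (fun i : Fin (k + 1) => P.coeff i)
        (MvPolynomial.aeval (fun i : Fin (k + 1) =>
          MvPolynomial.X i - MvPolynomial.C (a i)) W) = MvPolynomial.aeval D W := by
      rw [show MvPolynomial.aeval (fun i : Fin (k + 1) => P.coeff i)
          (MvPolynomial.aeval (fun i : Fin (k + 1) =>
            MvPolynomial.X i - MvPolynomial.C (a i)) W)
        = ((MvPolynomial.aeval (fun i : Fin (k + 1) => P.coeff i)).comp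
            (MvPolynomial.aeval (fun i : Fin (k + 1) =>
              MvPolynomial.X i - MvPolynomial.C (a i)))) W from rfl]
      rw [MvPolynomial.comp_aeval]
      have hfun : (fun i : Fin (k + 1) =>
          MvPolynomial.aeval (fun i : Fin (k + 1) => P.coeff (i : ℕ))
            (MvPolynomial.X i - MvPolynomial.C (a (i : ℕ)))) = D := by
        funext i
        rw [map_sub, MvPolynomial.aeval_X, MvPolynomial.aeval_C, MvPolynomial.algebraMap_eq,
          hD_def]
      rw [hfun]
    rw [hcomp]
    exact hWJ
end

section
/- Let F be a field of characteristic zero, and let Q = {Q_1,...,Q_t} ⊆ F[X_1,...,X_N] have algebraic rank k with B = {Q_1,...,Q_k} a maximal algebraically independent subset. Then there exists a ∈ F^N and polynomials F_{k+1},...,F_t in k variables such that for all i ∈ {k+1,...,t}, Q_i(X + a) = h^{≤ d_i}[ F_i(Q_1(X+a), ..., Q_k(X+a)) ], where d_i = deg(Q_i) and h^{≤d}[g] denotes the truncation of g to homogeneous components of degree at most d. -/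
open MvPolynomial

namespace AlgDepAux

variable {F : Type*} [Field F] {N : ℕ}

/-- All coefficients of monomials of degree `< n` vanish. -/
def LZ (n : ℕ) (p : MvPolynomial (Fin N) F) : Prop :=
  ∀ d : Fin N →₀ ℕ, d.degree < n → MvPolynomial.coeff d p = 0

lemma degree_add' (u v : Fin N →₀ ℕ) : (u + v).degree = u.degree + v.degree := by
  simp only [Finsupp.degree_eq_weight_one]
  exact map_add _ u v

lemma LZ.mono {m n : ℕ} {p : MvPolynomial (Fin N) F} (h : LZ n p) (hmn : m ≤ n) : LZ m p :=
  fun d hd => h d (lt_of_lt_of_le hd hmn)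

lemma LZ.sub {n : ℕ} {p q : MvPolynomial (Fin N) F} (hp : LZ n p) (hq : LZ n q) :
    LZ n (p - q) := fun d hd => by
  rw [MvPolynomial.coeff_sub, hp d hd, hq d hd, sub_zero]

lemma LZ.mul {m n : ℕ} {p q : MvPolynomial (Fin N) F} (hp : LZ m p) (hq : LZ n q) :
    LZ (m + n) (p * q) := by
  intro d hd
  rw [MvPolynomial.coeff_mul]
  refine Finset.sum_eq_zero fun x hx => ?_
  rw [Finset.HasAntidiagonal.mem_antidiagonal] at hx
  rcases lt_or_ge x.1.degree m with h | h
  · rw [hp x.1 h, zero_mul]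
  · have hx2 : x.2.degree < n := by
      have h2 := degree_add' x.1 x.2
      rw [hx] at h2
      omega
    rw [hq x.2 hx2, mul_zero]

lemma LZ.pow {p : MvPolynomial (Fin N) F} (hp : LZ 1 p) : ∀ n : ℕ, LZ n (p ^ n)
  | 0 => fun d hd => absurd hd (Nat.not_lt_zero _)
  | n + 1 => by
    rw [pow_succ]
    exact (LZ.pow hp n).mul hp

lemma LZ_one_iff {p : MvPolynomial (Fin N) F} :
    LZ 1 p ↔ constantCoeff p = 0 := by
  constructor
  · intro h
    exact h 0 (by simp)
  · intro h d hd
    have hd0 : d = 0 := by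
      rwa [Nat.lt_one_iff, Finsupp.degree_eq_zero_iff] at hd
    subst hd0
    exact h

lemma LZ.hc_eq {n : ℕ} {p q : MvPolynomial (Fin N) F} (h : LZ n (p - q)) {j : ℕ} (hj : j < n) :
    homogeneousComponent j p = homogeneousComponent j q := by
  ext d
  simp only [coeff_homogeneousComponent]
  split_ifs with hd
  · have h0 := h d (by rw [hd]; exact hj)
    rw [MvPolynomial.coeff_sub, sub_eq_zero] at h0
    exact h0
  · rfl

lemma sum_range_hc {p : MvPolynomial (Fin N) F} {n : ℕ} (h : p.totalDegree < n) :
    ∑ j ∈ Finset.range n, homogeneousComponent j p = p := by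
  refine (Finset.sum_subset (Finset.range_subset_range.mpr h) ?_).symm.trans
    (sum_homogeneousComponent p)
  intro j _ hj
  rw [Finset.mem_range, not_lt] at hj
  exact homogeneousComponent_eq_zero j p hj

lemma totalDegree_translate (a : Fin N → F) (p : MvPolynomial (Fin N) F) :
    (aeval (fun m => X m + C (a m) : Fin N → MvPolynomial (Fin N) F) p).totalDegree
      ≤ p.totalDegree := by
  conv_lhs => rw [p.as_sum]
  rw [map_sum]
  refine (totalDegree_finset_sum _ _).trans (Finset.sup_le fun v hv => ?_)
  rw [aeval_monomial]
  refine (totalDegree_mul _ _).trans ?_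
  have h1 : (algebraMap F (MvPolynomial (Fin N) F) (coeff v p)).totalDegree = 0 := by
    rw [MvPolynomial.algebraMap_eq]; exact totalDegree_C _
  rw [h1, zero_add]
  have h2 : (v.prod fun m k => (X m + C (a m) : MvPolynomial (Fin N) F) ^ k).totalDegree
      ≤ ∑ m ∈ v.support, v m := by
    rw [Finsupp.prod]
    refine (totalDegree_finset_prod _ _).trans (Finset.sum_le_sum fun m _ => ?_)
    refine (totalDegree_pow _ _).trans ?_
    have h3 : (X m + C (a m) : MvPolynomial (Fin N) F).totalDegree ≤ 1 := by
      refine (totalDegree_add _ _).trans ?_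
      simp [totalDegree_X, totalDegree_C]
    calc v m * (X m + C (a m) : MvPolynomial (Fin N) F).totalDegree ≤ v m * 1 :=
          Nat.mul_le_mul_left _ h3
      _ = v m := Nat.mul_one _
  refine h2.trans ?_
  have := MvPolynomial.le_totalDegree (p := p) (s := v) hv
  simpa [Finsupp.sum] using this


lemma newton {k : ℕ} (ψ : MvPolynomial (Fin k) F →+* MvPolynomial (Fin N) F)
    (hψC : ∀ c : F, ψ (MvPolynomial.C c) = MvPolynomial.C c)
    (p : MvPolynomial (Fin N) F) (B : Polynomial (MvPolynomial (Fin k) F))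
    (hann : Polynomial.eval₂ ψ p B = 0)
    (hc : Polynomial.eval₂ ((constantCoeff : MvPolynomial (Fin N) F →+* F).comp ψ)
      (constantCoeff p) (Polynomial.derivative B) ≠ 0) :
    ∀ n : ℕ, ∃ G : MvPolynomial (Fin k) F, LZ (n + 1) (p - ψ G) := by
  set ε : MvPolynomial (Fin N) F →+* F := constantCoeff with hε
  set c : F := Polynomial.eval₂ (ε.comp ψ) (ε p) (Polynomial.derivative B) with hcdef
  set B' := Polynomial.derivative B with hB'
  intro n
  induction n with
  | zero =>
    refine ⟨MvPolynomial.C (constantCoeff p), ?_⟩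
    rw [LZ_one_iff, hψC]
    simp
  | succ n ih =>
    obtain ⟨G, hG⟩ := ih
    set e : MvPolynomial (Fin N) F := p - ψ G with he
    have he0 : constantCoeff e = 0 := LZ_one_iff.mp (hG.mono (by omega))
    obtain ⟨z, hz⟩ := Polynomial.binomExpansion (B.map ψ) (ψ G) e
    have hadd : ψ G + e = p := by rw [he]; ring
    have hzero : (B.map ψ).eval (ψ G + e) = 0 := by
      rw [hadd, Polynomial.eval_map, hann]
    have hC0 : (B.map ψ).eval (ψ G) = ψ (Polynomial.eval G B) := by
      rw [Polynomial.eval_map, Polynomial.eval₂_hom]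
    have hDeval : ((B.map ψ).derivative).eval (ψ G) = ψ (Polynomial.eval G B') := by
      rw [Polynomial.derivative_map, Polynomial.eval_map, Polynomial.eval₂_hom]
    set D : MvPolynomial (Fin N) F := ψ (Polynomial.eval G B') with hD
    set C0 : MvPolynomial (Fin N) F := ψ (Polynomial.eval G B) with hC0def
    have hmain : C0 + D * e + z * e ^ 2 = 0 := by
      rw [← hC0, ← hDeval, ← hz, hzero]
    -- constant coefficient of D is c
    have hεψG : ε (ψ G) = ε p := by
      have h1 : ε e = 0 := he0
      rw [he, map_sub, sub_eq_zero] at h1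
      exact h1.symm
    have hDc : ε D = c := by
      have h1 := Polynomial.hom_eval₂ B' (RingHom.id (MvPolynomial (Fin k) F)) (ε.comp ψ) G
      rw [RingHom.comp_id] at h1
      have h2 : ε (ψ (Polynomial.eval G B')) =
          Polynomial.eval₂ (ε.comp ψ) (ε (ψ G)) B' := h1
      rw [hD, h2, hεψG, hcdef]
    have hc0 : c ≠ 0 := hc
    -- geometric inverse
    set V : MvPolynomial (Fin k) F :=
      MvPolynomial.C c⁻¹ * (MvPolynomial.C c - Polynomial.eval G B') with hV
    set v : MvPolynomial (Fin N) F := ψ V with hv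
    have hvD : v = MvPolynomial.C c⁻¹ * (MvPolynomial.C c - D) := by
      rw [hv, hV, map_mul, map_sub, hψC, hψC, hD]
    have hv1 : LZ 1 v := by
      rw [LZ_one_iff, hvD, map_mul, map_sub]
      simp only [constantCoeff_C]
      rw [show (constantCoeff D : F) = c from hDc]
      ring
    have hDv : D = MvPolynomial.C c * (1 - v) := by
      rw [hvD]
      rw [mul_sub, ← mul_assoc, ← map_mul, mul_inv_cancel₀ hc0]
      simp [mul_sub]
    set U : MvPolynomial (Fin k) F :=
      MvPolynomial.C c⁻¹ * (∑ j ∈ Finset.range (n + 2), V ^ j) with hU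
    set u : MvPolynomial (Fin N) F := ψ U with hu
    have huv : u = MvPolynomial.C c⁻¹ * (∑ j ∈ Finset.range (n + 2), v ^ j) := by
      rw [hu, hU, map_mul, hψC, map_sum]
      simp [hv]
    have hgeom : (∑ j ∈ Finset.range (n + 2), v ^ j) * (1 - v) = 1 - v ^ (n + 2) := by
      have h1 := geom_sum_mul v (n + 2)
      linear_combination -h1
    have huD : u * D = 1 - v ^ (n + 2) := by
      rw [huv, hDv]
      calc MvPolynomial.C c⁻¹ * (∑ j ∈ Finset.range (n + 2), v ^ j) *
            (MvPolynomial.C c * (1 - v))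
          = (MvPolynomial.C c⁻¹ * MvPolynomial.C c) *
            ((∑ j ∈ Finset.range (n + 2), v ^ j) * (1 - v)) := by ring
        _ = 1 - v ^ (n + 2) := by
            rw [← map_mul, inv_mul_cancel₀ hc0, map_one, one_mul, hgeom]
    refine ⟨G - U * Polynomial.eval G B, ?_⟩
    have hkey : p - ψ (G - U * Polynomial.eval G B) =
        v ^ (n + 2) * e - (u * z) * e ^ 2 := by
      have h2 : p - ψ (G - U * Polynomial.eval G B) = e + u * C0 := by
        rw [map_sub, map_mul, he, hu, hC0def]; ring
      rw [h2]
      have h3 : u * C0 = - (u * D) * e - u * z * e ^ 2 := by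
        have h4 : C0 = - (D * e) - z * e ^ 2 := by linear_combination hmain
        rw [h4]; ring
      rw [h3, huD]; ring
    rw [hkey]
    have hterm1 : LZ (n + 2) (v ^ (n + 2) * e) := by
      have := (hv1.pow (n + 2)).mul hG
      exact this.mono (by omega)
    have hterm2 : LZ (n + 2) ((u * z) * e ^ 2) := by
      have he2 : LZ (2 * (n + 1)) (e ^ 2) := by
        have := hG.mul hG
        rw [← pow_two] at this
        exact this.mono (by omega)
      have htriv : LZ 0 (u * z) := fun d hd => absurd hd (Nat.not_lt_zero _)
      have := htriv.mul he2
      exact this.mono (by omega)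
    exact hterm1.sub hterm2

end AlgDepAux

/-- From algebraic dependence to functional dependence: if `{Q_1, …, Q_t}` has
algebraic rank `k` with maximal algebraically independent subset
`{Q_1, …, Q_k}`, then there is a translation `a ∈ F^N` and polynomials `F_i` in
`k` variables such that for every `i > k`,
`Q_i(X+a) = h^{≤ deg Q_i}[F_i(Q_1(X+a), …, Q_k(X+a))]`. -/
theorem algebraic_dependence_to_functional_dependence {F : Type*} [Field F]
    [CharZero F] {N t k : ℕ} (hk : k ≤ t) (Q : Fin t → MvPolynomial (Fin N) F)
    (hindep : ∀ R : MvPolynomial (Fin k) F,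
      MvPolynomial.aeval (fun j : Fin k => Q (Fin.castLE hk j)) R = 0 → R = 0)
    (hmax : ∀ i : Fin t, ∃ A : MvPolynomial (Option (Fin k)) F, A ≠ 0 ∧
      MvPolynomial.aeval (fun o : Option (Fin k) =>
        o.elim (Q i) (fun j => Q (Fin.castLE hk j))) A = 0) :
    ∃ a : Fin N → F, ∃ Fi : Fin t → MvPolynomial (Fin k) F,
      ∀ i : Fin t, k ≤ (i : ℕ) →
        MvPolynomial.aeval (fun m : Fin N =>
            MvPolynomial.X m + MvPolynomial.C (a m)) (Q i) =
          ∑ j ∈ Finset.range ((Q i).totalDegree + 1),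
            MvPolynomial.homogeneousComponent j
              (MvPolynomial.aeval (fun l : Fin k =>
                MvPolynomial.aeval (fun m : Fin N =>
                  MvPolynomial.X m + MvPolynomial.C (a m)) (Q (Fin.castLE hk l)))
                (Fi i)) := by
  classical
  let φ : MvPolynomial (Fin k) F →ₐ[F] MvPolynomial (Fin N) F :=
    aeval (fun j : Fin k => Q (Fin.castLE hk j))
  -- Step 1: minimal annihilating polynomials with non-vanishing derivative
  have key : ∀ i : Fin t, ∃ B : Polynomial (MvPolynomial (Fin k) F),
      Polynomial.eval₂ φ.toRingHom (Q i) B = 0 ∧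
      Polynomial.eval₂ φ.toRingHom (Q i) (Polynomial.derivative B) ≠ 0 := by
    intro i
    obtain ⟨A, hA0, hAann⟩ := hmax i
    have bridge : (Polynomial.eval₂RingHom φ.toRingHom (Q i)).comp
        ((optionEquivLeft F (Fin k)).toAlgHom.toRingHom) =
        (aeval (fun o : Option (Fin k) =>
          o.elim (Q i) fun j => Q (Fin.castLE hk j))).toRingHom := by
      apply MvPolynomial.ringHom_ext
      · intro r
        simp [optionEquivLeft_C, φ, algebraMap_eq]
      · intro o
        cases o with
        | none => simp [optionEquivLeft_X_none]
        | some j => simp [optionEquivLeft_X_some, φ]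
    have hB₀ann : Polynomial.eval₂ φ.toRingHom (Q i)
        (optionEquivLeft F (Fin k) A) = 0 := by
      have h1 := RingHom.congr_fun bridge A
      simp only [RingHom.comp_apply, AlgHom.toRingHom_eq_coe, RingHom.coe_coe,
        AlgEquiv.toAlgHom_eq_coe, Polynomial.coe_eval₂RingHom] at h1
      exact h1.trans hAann
    have hB₀0 : optionEquivLeft F (Fin k) A ≠ 0 := by
      intro h
      exact hA0 ((optionEquivLeft F (Fin k)).injective (by simp [h]))
    have hex : ∃ n : ℕ, ∃ B : Polynomial (MvPolynomial (Fin k) F), B ≠ 0 ∧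
        Polynomial.eval₂ φ.toRingHom (Q i) B = 0 ∧ B.natDegree = n :=
      ⟨_, optionEquivLeft F (Fin k) A, hB₀0, hB₀ann, rfl⟩
    obtain ⟨B, hB0, hBann, hBdeg⟩ := Nat.find_spec hex
    have hBpos : B.natDegree ≠ 0 := by
      intro h0
      have hBC : B = Polynomial.C (B.coeff 0) := Polynomial.eq_C_of_natDegree_eq_zero h0
      rw [hBC, Polynomial.eval₂_C] at hBann
      have hb0 : B.coeff 0 = 0 := hindep _ hBann
      rw [hBC, hb0, map_zero] at hB0
      exact hB0 rfl
    have hBd0 : Polynomial.derivative B ≠ 0 := fun h =>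
      hBpos (Polynomial.natDegree_eq_zero_of_derivative_eq_zero h)
    refine ⟨B, hBann, fun hcon => ?_⟩
    have hlt : (Polynomial.derivative B).natDegree < Nat.find hex :=
      hBdeg ▸ Polynomial.natDegree_derivative_lt hBpos
    exact Nat.find_min hex hlt ⟨_, hBd0, hcon, rfl⟩
  choose B hBann hBder using key
  -- Step 2: choose a good translation point
  have hP : (∏ i : Fin t,
      Polynomial.eval₂ φ.toRingHom (Q i) (Polynomial.derivative (B i))) ≠ 0 :=
    Finset.prod_ne_zero_iff.mpr fun i _ => hBder i
  obtain ⟨a, ha⟩ : ∃ a : Fin N → F, eval a (∏ i : Fin t,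
      Polynomial.eval₂ φ.toRingHom (Q i) (Polynomial.derivative (B i))) ≠ 0 := by
    by_contra hcon
    push_neg at hcon
    exact hP (MvPolynomial.funext fun x => by rw [hcon x, map_zero])
  have ha' : ∀ i : Fin t,
      eval a (Polynomial.eval₂ φ.toRingHom (Q i) (Polynomial.derivative (B i))) ≠ 0 := by
    intro i h0
    apply ha
    rw [map_prod]
    exact Finset.prod_eq_zero (Finset.mem_univ i) h0
  -- Step 3: set up translation
  let τ : MvPolynomial (Fin N) F →ₐ[F] MvPolynomial (Fin N) F :=
    aeval (fun m : Fin N => X m + C (a m))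
  let ψ : MvPolynomial (Fin k) F →+* MvPolynomial (Fin N) F :=
    τ.toRingHom.comp φ.toRingHom
  have hψC : ∀ r : F, ψ (C r) = C r := by
    intro r
    show τ (φ (C r)) = C r
    simp [φ, τ, aeval_C, algebraMap_eq]
  have hCτ : (constantCoeff.comp τ.toRingHom : MvPolynomial (Fin N) F →+* F) =
      eval a := by
    apply MvPolynomial.ringHom_ext
    · intro r
      simp [τ, aeval_C, algebraMap_eq]
    · intro m
      simp [τ]
  have hCτ' : ∀ p : MvPolynomial (Fin N) F, constantCoeff (τ p) = eval a p :=
    fun p => RingHom.congr_fun hCτ p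
  have hannτ : ∀ i : Fin t, Polynomial.eval₂ ψ (τ (Q i)) (B i) = 0 := by
    intro i
    have h1 := Polynomial.hom_eval₂ (B i) φ.toRingHom τ.toRingHom (Q i)
    rw [hBann i, map_zero] at h1
    exact h1.symm
  have hci : ∀ i : Fin t,
      Polynomial.eval₂ ((constantCoeff : MvPolynomial (Fin N) F →+* F).comp ψ)
        (constantCoeff (τ (Q i))) (Polynomial.derivative (B i)) ≠ 0 := by
    intro i
    have hcomp : (constantCoeff : MvPolynomial (Fin N) F →+* F).comp ψ =
        (eval a : MvPolynomial (Fin N) F →+* F).comp φ.toRingHom := by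
      show constantCoeff.comp (τ.toRingHom.comp φ.toRingHom) = _
      rw [← RingHom.comp_assoc, hCτ]
    rw [hcomp, hCτ' (Q i)]
    have h2 := Polynomial.hom_eval₂ (Polynomial.derivative (B i)) φ.toRingHom
      (eval a : MvPolynomial (Fin N) F →+* F) (Q i)
    rw [← h2]
    exact ha' i
  -- Step 4: Newton iteration
  have main : ∀ i : Fin t, ∃ G : MvPolynomial (Fin k) F,
      AlgDepAux.LZ ((Q i).totalDegree + 1) (τ (Q i) - ψ G) :=
    fun i => AlgDepAux.newton ψ hψC (τ (Q i)) (B i) (hannτ i) (hci i)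
      ((Q i).totalDegree)
  choose G hG using main
  refine ⟨a, G, fun i _ => ?_⟩
  have hψG : aeval (fun l : Fin k =>
      aeval (fun m : Fin N => X m + C (a m)) (Q (Fin.castLE hk l))) (G i) =
      ψ (G i) := by
    show aeval (fun l : Fin k => τ (Q (Fin.castLE hk l))) (G i) = τ (φ (G i))
    exact (comp_aeval_apply (f := fun j : Fin k => Q (Fin.castLE hk j)) τ (G i)).symm
  rw [hψG]
  have hsum : ∑ j ∈ Finset.range ((Q i).totalDegree + 1),
      homogeneousComponent j (ψ (G i)) = τ (Q i) := by
    have h1 : ∀ j ∈ Finset.range ((Q i).totalDegree + 1),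
        homogeneousComponent j (ψ (G i)) = homogeneousComponent j (τ (Q i)) := by
      intro j hj
      exact ((hG i).hc_eq (Finset.mem_range.mp hj)).symm
    rw [Finset.sum_congr rfl h1]
    exact AlgDepAux.sum_range_hc
      (Nat.lt_succ_of_le (AlgDepAux.totalDegree_translate a (Q i)))
  rw [hsum]
end

section
/- Let F be a field of characteristic zero, and let Q = {Q_1,...,Q_t} ⊆ F[X_1,...,X_N] be polynomials each of degree less than d, with algebraic rank k and B = {Q_1,...,Q_k} a maximal algebraically independent subset. Then there exists a ∈ F^N and, for each i ∈ {k+1,...,t}, a polynomial F_i in at most k(d+1) variables, such that Q_i(X + a) = F_i applied to the tuple of all homogeneous components (h^0, h^1, ..., h^d) of Q_1(X+a), ..., Q_k(X+a). -/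
open MvPolynomial

open Finset


lemma hc_monomial {σ R : Type*} [CommSemiring R] (n : ℕ) (u : σ →₀ ℕ) (a : R) :
    homogeneousComponent n (monomial u a) =
      if n = u.degree then monomial u a else 0 :=
  homogeneousComponent_of_mem ((mem_homogeneousSubmodule _ _).mpr
    (isHomogeneous_monomial a rfl))

lemma degree_add' {σ : Type*} (u v : σ →₀ ℕ) :
    (u + v).degree = u.degree + v.degree := by
  simp [Finsupp.degree_eq_weight_one]

lemma hc_mul {σ R : Type*} [CommSemiring R] (p q : MvPolynomial σ R) (n : ℕ) :
    homogeneousComponent n (p * q) =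
      ∑ ij ∈ Finset.HasAntidiagonal.antidiagonal n,
        homogeneousComponent ij.1 p * homogeneousComponent ij.2 q := by
  induction p using MvPolynomial.induction_on' with
  | add p1 p2 ih1 ih2 =>
      simp only [add_mul, map_add, ih1, ih2, ← Finset.sum_add_distrib]
  | monomial u a =>
      induction q using MvPolynomial.induction_on' with
      | add q1 q2 ih1 ih2 =>
          simp only [mul_add, map_add, ih1, ih2, ← Finset.sum_add_distrib]
      | monomial v b =>
          rw [monomial_mul, hc_monomial]
          have : ∀ ij : ℕ × ℕ, ij ∈ Finset.HasAntidiagonal.antidiagonal n →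
              homogeneousComponent ij.1 (monomial u a) *
                homogeneousComponent ij.2 (monomial v b) =
              if ij = (u.degree, v.degree) then monomial (u + v) (a * b) else 0 := by
            intro ij _
            rw [hc_monomial, hc_monomial]
            by_cases h1 : ij.1 = u.degree <;> by_cases h2 : ij.2 = v.degree <;>
              simp [h1, h2, Prod.ext_iff, monomial_mul]
          rw [Finset.sum_congr rfl this, Finset.sum_ite_eq' (Finset.HasAntidiagonal.antidiagonal n)]
          simp [Finset.HasAntidiagonal.mem_antidiagonal, degree_add', eq_comm]


lemma totalDegree_aeval_le' {σ τ R : Type*} [CommSemiring R]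
    (f : σ → MvPolynomial τ R) (hf : ∀ m, (f m).totalDegree ≤ 1)
    (p : MvPolynomial σ R) :
    (aeval f p).totalDegree ≤ p.totalDegree := by
  rw [aeval_def, eval₂_eq]
  apply totalDegree_finsetSum_le
  intro u hu
  calc (C (coeff u p) * ∏ i ∈ u.support, f i ^ u i).totalDegree
      ≤ (C (coeff u p)).totalDegree + (∏ i ∈ u.support, f i ^ u i).totalDegree :=
        totalDegree_mul _ _
    _ ≤ 0 + ∑ i ∈ u.support, (f i ^ u i).totalDegree :=
        add_le_add (by simp) (totalDegree_finset_prod _ _)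
    _ ≤ ∑ i ∈ u.support, u i * 1 := by
        rw [zero_add]
        apply Finset.sum_le_sum
        intro i _
        exact (totalDegree_pow _ _).trans (by gcongr; exact hf i)
    _ ≤ p.totalDegree := by simpa [Finsupp.sum] using le_totalDegree hu

lemma sum_hc_of_lt {σ R : Type*} [CommSemiring R] {p : MvPolynomial σ R} {D : ℕ}
    (h : p.totalDegree < D) :
    ∑ n ∈ Finset.range D, homogeneousComponent n p = p := by
  conv_rhs => rw [← sum_homogeneousComponent p]
  refine (Finset.sum_subset ?_ ?_).symm
  · intro x hx; simp only [Finset.mem_range] at *; omega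
  · intro x hx hx'
    simp only [Finset.mem_range, not_lt] at hx hx'
    exact homogeneousComponent_eq_zero _ _ (Nat.lt_of_succ_le hx')

/-- a subalgebra generated by homogeneous elements is closed under taking
homogeneous components -/
lemma hc_mem_adjoin {σ R : Type*} [CommRing R] {s : Set (MvPolynomial σ R)}
    (hs : ∀ x ∈ s, ∃ n, x.IsHomogeneous n) {p : MvPolynomial σ R}
    (hp : p ∈ Algebra.adjoin R s) (m : ℕ) :
    homogeneousComponent m p ∈ Algebra.adjoin R s := by
  induction hp using Algebra.adjoin_induction generalizing m with
  | mem x hx =>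
      obtain ⟨n, hn⟩ := hs x hx
      rw [homogeneousComponent_of_mem ((mem_homogeneousSubmodule _ _).mpr hn)]
      split_ifs
      · exact Algebra.subset_adjoin hx
      · exact Subalgebra.zero_mem _
  | algebraMap r =>
      rcases Nat.eq_zero_or_pos m with hm | hm
      · subst hm
        rw [homogeneousComponent_zero]
        have : coeff 0 (algebraMap R (MvPolynomial σ R) r) = r := by
          simp [algebraMap_eq]
        rw [this]
        exact Subalgebra.algebraMap_mem _ r
      · have hdc : (algebraMap R (MvPolynomial σ R) r).totalDegree < m := by
          rw [algebraMap_eq, totalDegree_C]; exact hm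
        rw [homogeneousComponent_eq_zero _ _ hdc]
        exact Subalgebra.zero_mem _
  | add x y _ _ ihx ihy =>
      rw [map_add]; exact Subalgebra.add_mem _ (ihx m) (ihy m)
  | mul x y _ _ ihx ihy =>
      have hcm := hc_mul (σ := σ) (R := R) x y m
      rw [hcm]
      exact Subalgebra.sum_mem _ fun ij _ =>
        Subalgebra.mul_mem _ (ihx ij.1) (ihy ij.2)


lemma ringHom_polyEval {A B : Type*} [CommSemiring A] [CommSemiring B]
    (g : A →+* B) (p : Polynomial A) (x : A) :
    g (p.eval x) = (p.map g).eval (g x) := by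
  rw [Polynomial.eval_map, Polynomial.eval, Polynomial.hom_eval₂]
  simp

lemma aeval_optionEquivLeft' {ι R S : Type*} [CommSemiring R] [CommSemiring S]
    [Algebra R S] (f : Option ι → S) (A : MvPolynomial (Option ι) R) :
    aeval f A =
      (((optionEquivLeft R ι) A).map
        ((aeval (fun j => f (some j)) : MvPolynomial ι R →ₐ[R] S) :
          MvPolynomial ι R →+* S)).eval (f none) := by
  induction A using MvPolynomial.induction_on with
  | C a =>
      simp [optionEquivLeft_C, aeval_C]
  | add p q ihp ihq =>
      simp [map_add, ihp, ihq]
  | mul_X p o ih =>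
      cases o with
      | none => simp [map_mul, optionEquivLeft_X_none, ih]
      | some j => simp [map_mul, optionEquivLeft_X_some, ih]

lemma exists_min_annihilator {F : Type*} [Field F] [CharZero F] {N k : ℕ}
    (Qs : Fin k → MvPolynomial (Fin N) F) (Qi : MvPolynomial (Fin N) F)
    (hindep : ∀ R : MvPolynomial (Fin k) F, aeval Qs R = 0 → R = 0)
    (hA : ∃ A : MvPolynomial (Option (Fin k)) F, A ≠ 0 ∧
      aeval (fun o : Option (Fin k) => o.elim Qi Qs) A = 0) :
    ∃ P : Polynomial (MvPolynomial (Fin k) F),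
      (P.map ((aeval Qs : MvPolynomial (Fin k) F →ₐ[F] MvPolynomial (Fin N) F) :
        MvPolynomial (Fin k) F →+* MvPolynomial (Fin N) F)).eval Qi = 0 ∧
      (P.derivative.map ((aeval Qs : MvPolynomial (Fin k) F →ₐ[F] MvPolynomial (Fin N) F) :
        MvPolynomial (Fin k) F →+* MvPolynomial (Fin N) F)).eval Qi ≠ 0 := by
  classical
  set φR : MvPolynomial (Fin k) F →+* MvPolynomial (Fin N) F :=
    ((aeval Qs : MvPolynomial (Fin k) F →ₐ[F] MvPolynomial (Fin N) F) :
      MvPolynomial (Fin k) F →+* MvPolynomial (Fin N) F) with hφR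
  obtain ⟨A, hA0, hAann⟩ := hA
  have hex : ∃ n, ∃ P : Polynomial (MvPolynomial (Fin k) F),
      P ≠ 0 ∧ (P.map φR).eval Qi = 0 ∧ P.natDegree = n := by
    refine ⟨_, optionEquivLeft F (Fin k) A, ?_, ?_, rfl⟩
    · intro h
      apply hA0
      have := congrArg (optionEquivLeft F (Fin k)).symm h
      rwa [AlgEquiv.symm_apply_apply, map_zero] at this
    · have := aeval_optionEquivLeft' (fun o : Option (Fin k) => o.elim Qi Qs) A
      simp only [Option.elim] at this hAann
      rw [hAann] at this
      exact this.symm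
  obtain ⟨P, hP0, hPann, hPdeg⟩ := Nat.find_spec hex
  refine ⟨P, hPann, ?_⟩
  -- P has positive degree
  have hdegpos : P.natDegree ≠ 0 := by
    intro h0
    obtain ⟨c, rfl⟩ : ∃ c, P = Polynomial.C c := ⟨P.coeff 0, (Polynomial.eq_C_of_natDegree_eq_zero h0)⟩
    rw [Polynomial.map_C, Polynomial.eval_C] at hPann
    exact hP0 (by rw [hindep c hPann, map_zero])
  intro hder
  -- derivative is nonzero
  have hd0 : P.derivative ≠ 0 := by
    intro h
    exact hdegpos (Polynomial.natDegree_eq_zero_of_derivative_eq_zero h)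
  have hlt : P.derivative.natDegree < Nat.find hex := by
    rw [← hPdeg]
    exact Polynomial.natDegree_derivative_lt hdegpos
  exact Nat.find_min hex hlt ⟨P.derivative, hd0, hder, rfl⟩


/-- Functional dependence without truncation: if `{Q_1, …, Q_t}` are
polynomials of degree less than `d` with algebraic rank `k` and maximal
algebraically independent subset `{Q_1, …, Q_k}`, then there is a translation
`a ∈ F^N` and, for each `i > k`, a polynomial `F_i` in `k(d+1)` variables such
that `Q_i(X+a)` equals `F_i` applied to the tuple of all homogeneous components
`h^0, …, h^d` of `Q_1(X+a), …, Q_k(X+a)`. -/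
theorem functional_dependence_on_homogeneous_components {F : Type*} [Field F]
    [CharZero F] {N t k d : ℕ} (hk : k ≤ t) (Q : Fin t → MvPolynomial (Fin N) F)
    (hdeg : ∀ i, (Q i).totalDegree < d)
    (hindep : ∀ R : MvPolynomial (Fin k) F,
      MvPolynomial.aeval (fun j : Fin k => Q (Fin.castLE hk j)) R = 0 → R = 0)
    (hmax : ∀ i : Fin t, ∃ A : MvPolynomial (Option (Fin k)) F, A ≠ 0 ∧
      MvPolynomial.aeval (fun o : Option (Fin k) =>
        o.elim (Q i) (fun j => Q (Fin.castLE hk j))) A = 0) :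
    ∃ a : Fin N → F, ∃ Fi : Fin t → MvPolynomial (Fin k × Fin (d + 1)) F,
      ∀ i : Fin t, k ≤ (i : ℕ) →
        MvPolynomial.aeval (fun m : Fin N =>
            MvPolynomial.X m + MvPolynomial.C (a m)) (Q i) =
          MvPolynomial.aeval (fun p : Fin k × Fin (d + 1) =>
            MvPolynomial.homogeneousComponent (p.2 : ℕ)
              (MvPolynomial.aeval (fun m : Fin N =>
                MvPolynomial.X m + MvPolynomial.C (a m)) (Q (Fin.castLE hk p.1))))
            (Fi i) := by

  classical
  set Qs : Fin k → MvPolynomial (Fin N) F := fun j => Q (Fin.castLE hk j) with hQs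
  set φR : MvPolynomial (Fin k) F →+* MvPolynomial (Fin N) F :=
    ((aeval Qs : MvPolynomial (Fin k) F →ₐ[F] MvPolynomial (Fin N) F) :
      MvPolynomial (Fin k) F →+* MvPolynomial (Fin N) F) with hφR
  have step1 : ∀ i : Fin t, ∃ P : Polynomial (MvPolynomial (Fin k) F),
      (P.map φR).eval (Q i) = 0 ∧ (P.derivative.map φR).eval (Q i) ≠ 0 :=
    fun i => exists_min_annihilator Qs (Q i) hindep (hmax i)
  choose P hPann hPder using step1
  -- choose the shift point a
  have hprod : (∏ i : Fin t, (((P i).derivative.map φR).eval (Q i))) ≠ 0 :=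
    Finset.prod_ne_zero_iff.mpr fun i _ => hPder i
  have hexa : ∃ a : Fin N → F,
      eval a (∏ i : Fin t, (((P i).derivative.map φR).eval (Q i))) ≠ 0 := by
    by_contra h
    push_neg at h
    exact hprod (MvPolynomial.funext_iff.mpr (fun x => by rw [h x, map_zero]))
  obtain ⟨a, ha⟩ := hexa
  have hGa : ∀ i : Fin t, eval a (((P i).derivative.map φR).eval (Q i)) ≠ 0 := by
    intro i hi
    apply ha
    rw [map_prod]
    exact Finset.prod_eq_zero (Finset.mem_univ i) hi
  -- shifted objects
  set τ : MvPolynomial (Fin N) F →ₐ[F] MvPolynomial (Fin N) F :=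
    aeval (fun m => X m + C (a m)) with hτ
  set qj : Fin k → MvPolynomial (Fin N) F := fun j => τ (Qs j) with hqj
  set ψR : MvPolynomial (Fin k) F →+* MvPolynomial (Fin N) F :=
    ((aeval qj : MvPolynomial (Fin k) F →ₐ[F] MvPolynomial (Fin N) F) :
      MvPolynomial (Fin k) F →+* MvPolynomial (Fin N) F) with hψR
  have hτφ : (τ : MvPolynomial (Fin N) F →+* MvPolynomial (Fin N) F).comp φR = ψR := by
    apply ringHom_ext
    · intro r; simp [hφR, hψR, aeval_C]
    · intro j; simp [hφR, hψR, hqj, aeval_X]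
  set cj : Fin k → F := fun j => eval a (Qs j) with hcj
  have hccτ : (constantCoeff : MvPolynomial (Fin N) F →+* F).comp
      (τ : MvPolynomial (Fin N) F →+* MvPolynomial (Fin N) F) = eval a := by
    apply ringHom_ext
    · intro r; simp [hτ, aeval_C]
    · intro m; simp [hτ, aeval_X]
  have hccψ : (constantCoeff : MvPolynomial (Fin N) F →+* F).comp ψR = eval cj := by
    apply ringHom_ext
    · intro r; simp [hψR, aeval_C]
    · intro j
      have h0 : constantCoeff (τ (Qs j)) = eval a (Qs j) := RingHom.congr_fun hccτ (Qs j)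
      simp only [RingHom.comp_apply, hψR, AlgHom.coe_toRingHom, aeval_X, hqj, hcj, eval_X]
      exact h0
  have hevφ : (eval a : MvPolynomial (Fin N) F →+* F).comp φR = eval cj := by
    apply ringHom_ext
    · intro r; simp [hφR, aeval_C]
    · intro j; simp [hφR, hcj, aeval_X]
  -- main per-index statement
  have main : ∀ i : Fin t, ∃ Fi : MvPolynomial (Fin k × Fin (d + 1)) F,
      τ (Q i) = aeval (fun p : Fin k × Fin (d + 1) =>
        homogeneousComponent (p.2 : ℕ) (qj p.1)) Fi := by
    intro i
    set qi := τ (Q i) with hqi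
    set gen : Set (MvPolynomial (Fin N) F) :=
      Set.range (fun p : Fin k × Fin (d + 1) =>
        homogeneousComponent (p.2 : ℕ) (qj p.1)) with hgen
    set T := Algebra.adjoin F gen with hT
    have hCmem : ∀ x : F, (C x : MvPolynomial (Fin N) F) ∈ T := fun x => by
      rw [← algebraMap_eq]; exact Subalgebra.algebraMap_mem T x
    have hshift1 : ∀ m : Fin N,
        ((X m + C (a m) : MvPolynomial (Fin N) F)).totalDegree ≤ 1 := by
      intro m
      refine (totalDegree_add _ _).trans ?_
      simp [totalDegree_X, totalDegree_C]
    have hdegτ : ∀ p : MvPolynomial (Fin N) F, (τ p).totalDegree ≤ p.totalDegree :=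
      totalDegree_aeval_le' _ hshift1
    have hdegqj : ∀ j, (qj j).totalDegree < d :=
      fun j => lt_of_le_of_lt (hdegτ _) (hdeg _)
    have hdegqi : qi.totalDegree < d := lt_of_le_of_lt (hdegτ _) (hdeg i)
    have hG1 : ∀ (j : Fin k) (n : ℕ), homogeneousComponent n (qj j) ∈ T := by
      intro j n
      rcases lt_or_ge n (d + 1) with h | h
      · exact Algebra.subset_adjoin ⟨(j, ⟨n, h⟩), rfl⟩
      · rw [homogeneousComponent_eq_zero _ _ (lt_of_lt_of_le (hdegqj j) (by omega))]
        exact Subalgebra.zero_mem _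
    have hG2 : ∀ j, qj j ∈ T := by
      intro j
      rw [← sum_hc_of_lt (hdegqj j)]
      exact Subalgebra.sum_mem _ fun n _ => hG1 j n
    have hG5 : ∀ c : MvPolynomial (Fin k) F, aeval qj c ∈ T := by
      intro c
      have h1 : aeval qj c ∈ Algebra.adjoin F (Set.range qj) := by
        rw [Algebra.adjoin_range_eq_range_aeval]
        exact ⟨c, rfl⟩
      exact (Algebra.adjoin_le (by rintro x ⟨j, rfl⟩; exact hG2 j)) h1
    have hhom : ∀ x ∈ gen, ∃ n, MvPolynomial.IsHomogeneous x n := by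
      rintro x ⟨p, rfl⟩
      exact ⟨_, homogeneousComponent_isHomogeneous _ _⟩
    have hann2 : Polynomial.eval qi ((P i).map ψR) = 0 := by
      have h1 := ringHom_polyEval
        (τ : MvPolynomial (Fin N) F →+* MvPolynomial (Fin N) F) ((P i).map φR) (Q i)
      rw [hPann i, map_zero, Polynomial.map_map, hτφ] at h1
      exact h1.symm
    have key : ∀ m, homogeneousComponent m qi ∈ T := by
      intro m
      induction m using Nat.strong_induction_on with
      | _ m IH =>
      rcases Nat.eq_zero_or_pos m with rfl | hm
      · rw [homogeneousComponent_zero]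
        exact hCmem _
      · set qh := ∑ n ∈ Finset.range m, homogeneousComponent n qi with hqh
        have hqhT : qh ∈ T := Subalgebra.sum_mem _ fun n hn => IH n (Finset.mem_range.mp hn)
        have hqhcomp : ∀ v, homogeneousComponent v qh =
            if v < m then homogeneousComponent v qi else 0 := by
          intro v
          rw [hqh, map_sum]
          rw [Finset.sum_congr rfl (fun n _ =>
            homogeneousComponent_of_mem (homogeneousComponent_mem n qi))]
          rw [Finset.sum_ite_eq (Finset.range m) v (fun n => homogeneousComponent n qi)]
          simp [Finset.mem_range]
        set r := qi - qh with hr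
        have hrlow : ∀ v, v < m → homogeneousComponent v r = 0 := by
          intro v hv
          rw [hr, map_sub, hqhcomp v, if_pos hv, sub_self]
        have hrm : homogeneousComponent m r = homogeneousComponent m qi := by
          rw [hr, map_sub, hqhcomp m, if_neg (lt_irrefl m), sub_zero]
        obtain ⟨kk, hkk⟩ := Polynomial.binomExpansion ((P i).map ψR) qh r
        rw [show qh + r = qi by rw [hr]; ring, hann2] at hkk
        have hexp := congrArg (homogeneousComponent m) hkk
        simp only [map_zero, map_add] at hexp
        rw [Polynomial.derivative_map] at hexp
        set Dq := Polynomial.eval qh (((P i).derivative).map ψR) with hDq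
        set A1 := Polynomial.eval qh ((P i).map ψR) with hA1
        have hA1T : homogeneousComponent m A1 ∈ T := by
          apply hc_mem_adjoin hhom
          rw [hA1, Polynomial.eval_eq_sum_range]
          apply Subalgebra.sum_mem
          intro n _
          apply Subalgebra.mul_mem
          · rw [Polynomial.coeff_map]; exact hG5 _
          · exact Subalgebra.pow_mem _ hqhT n
        have hB : homogeneousComponent m (Dq * r) =
            C (constantCoeff Dq) * homogeneousComponent m qi := by
          rw [hc_mul]
          rw [Finset.sum_eq_single ((0 : ℕ), m)]
          · rw [homogeneousComponent_zero, hrm, constantCoeff_eq]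
          · rintro ⟨u, v⟩ hmem hne
            have huv : u + v = m := Finset.HasAntidiagonal.mem_antidiagonal.mp hmem
            have hvm : v < m := by
              rcases Nat.lt_or_ge v m with h | h
              · exact h
              · exfalso; apply hne
                have hv : v = m := by omega
                have hu : u = 0 := by omega
                simp [Prod.ext_iff, hu, hv]
            rw [hrlow v hvm, mul_zero]
          · intro hnot
            exact absurd (Finset.HasAntidiagonal.mem_antidiagonal.mpr (by simp)) hnot
        have hr2 : ∀ v, v ≤ m → homogeneousComponent v (r * r) = 0 := by
          intro v hv
          rw [hc_mul]
          apply Finset.sum_eq_zero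
          rintro ⟨v1, v2⟩ hmem
          have h12 : v1 + v2 = v := Finset.HasAntidiagonal.mem_antidiagonal.mp hmem
          rcases Nat.lt_or_ge v1 m with h | h
          · rw [hrlow v1 h, zero_mul]
          · rw [hrlow v2 (by omega), mul_zero]
        have hCterm : homogeneousComponent m (kk * r ^ 2) = 0 := by
          rw [pow_two, hc_mul]
          apply Finset.sum_eq_zero
          rintro ⟨u, v⟩ hmem
          have huv := Finset.HasAntidiagonal.mem_antidiagonal.mp hmem
          rw [hr2 v (by omega), mul_zero]
        rw [hB, hCterm, add_zero] at hexp
        have he : constantCoeff Dq ≠ 0 := by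
          have h1 : constantCoeff Dq =
              Polynomial.eval (constantCoeff qh)
                (((P i).derivative).map
                  ((constantCoeff : MvPolynomial (Fin N) F →+* F).comp ψR)) := by
            rw [hDq, ringHom_polyEval, Polynomial.map_map]
          have hccqh : constantCoeff qh = constantCoeff qi := by
            rw [hqh, map_sum, Finset.sum_eq_single 0]
            · rw [homogeneousComponent_zero, constantCoeff_C, constantCoeff_eq]
            · intro n _ hn
              rw [constantCoeff_eq]
              simp only [coeff_homogeneousComponent, map_zero]
              rw [if_neg (fun h => hn h.symm)]
            · intro h; exact absurd (Finset.mem_range.mpr hm) h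
          rw [h1, hccψ, hccqh]
          have h2 : constantCoeff qi = eval a (Q i) := by
            rw [hqi]
            exact (RingHom.congr_fun hccτ (Q i) : _)
          rw [h2]
          have h3 := hGa i
          have h4 := ringHom_polyEval (eval a : MvPolynomial (Fin N) F →+* F)
            (((P i).derivative).map φR) (Q i)
          rw [Polynomial.map_map, hevφ] at h4
          rw [← h4]
          exact h3
        have h2 : C (constantCoeff Dq) * homogeneousComponent m qi =
            - homogeneousComponent m A1 := by linear_combination -hexp
        have hw : homogeneousComponent m qi =
            C (constantCoeff Dq)⁻¹ * (- homogeneousComponent m A1) := by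
          rw [← h2, ← mul_assoc, ← C_mul, inv_mul_cancel₀ he, C_1, one_mul]
        rw [hw]
        exact Subalgebra.mul_mem _ (hCmem _) (Subalgebra.neg_mem _ hA1T)
    have hqiT : qi ∈ T := by
      rw [← sum_hc_of_lt hdegqi]
      exact Subalgebra.sum_mem _ fun n _ => key n
    have hrange : qi ∈ (aeval (fun p : Fin k × Fin (d + 1) =>
        homogeneousComponent (p.2 : ℕ) (qj p.1)) :
        MvPolynomial (Fin k × Fin (d + 1)) F →ₐ[F] MvPolynomial (Fin N) F).range := by
      refine Algebra.adjoin_le ?_ hqiT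
      rintro x ⟨p, rfl⟩
      exact ⟨X p, by simp⟩
    obtain ⟨Fi, hFi⟩ := hrange
    exact ⟨Fi, hFi.symm⟩
  choose Fi hFi using main
  exact ⟨a, Fi, fun i _ => hFi i⟩
end

section
/- Let P ∈ F[X_1,...,X_N] have degree at most d, let M be a set of monomials all of degree exactly r, and let m be a positive integer. Then for every 0 ≤ i ≤ d, Φ_{M,m}(P) ≥ Φ_{M,m}(h^i[P]), where h^i[P] is the degree-i homogeneous component of P. -/
open MvPolynomial

open MvPolynomial

/-- Derivative with respect to a monomial `μ`: apply `∂/∂X_i` exactly `μ i`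
times for each `i`. -/
noncomputable def monDeriv {F : Type*} [CommSemiring F] {N : ℕ} (μ : Fin N → ℕ) :
    Module.End F (MvPolynomial (Fin N) F) :=
  (List.ofFn (fun i : Fin N => ((MvPolynomial.pderiv i).toLinearMap ^ (μ i)))).prod

/-- Projection onto multilinear monomials: monomials with any exponent larger
than one are set to zero. -/
noncomputable def multProj {F : Type*} [CommSemiring F] {N : ℕ}
    (P : MvPolynomial (Fin N) F) : MvPolynomial (Fin N) F :=
  ∑ μ ∈ P.support.filter (fun μ => ∀ i, μ i ≤ 1),
    MvPolynomial.monomial μ (MvPolynomial.coeff μ P)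

/-- The dimension of the space of `(M, m)`-projected shifted partial
derivatives of `P`. -/
noncomputable def phiMeasure {F : Type*} [Field F] {N : ℕ}
    (M : Finset (Fin N → ℕ)) (m : ℕ) (P : MvPolynomial (Fin N) F) : ℕ :=
  Module.finrank F ↥(Submodule.span F
    { g : MvPolynomial (Fin N) F | ∃ μ ∈ M, ∃ S : Finset (Fin N), S.card = m ∧
        g = multProj ((∏ i ∈ S, MvPolynomial.X i) * (monDeriv μ P)) })

section Aux

variable {F : Type*} [CommSemiring F] {N : ℕ}

lemma coeff_multProj (P : MvPolynomial (Fin N) F) (ν : Fin N →₀ ℕ) :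
    MvPolynomial.coeff ν (multProj P) =
      if ∀ i, ν i ≤ 1 then MvPolynomial.coeff ν P else 0 := by
  classical
  unfold multProj
  rw [MvPolynomial.coeff_sum]
  simp only [MvPolynomial.coeff_monomial]
  rw [Finset.sum_ite_eq' _ ν (fun μ => MvPolynomial.coeff μ P)]
  by_cases h : ∀ i, ν i ≤ 1 <;> by_cases hν : MvPolynomial.coeff ν P = 0 <;>
    simp [Finset.mem_filter, MvPolynomial.mem_support_iff, h, hν]

/-- `multProj` as a linear map. -/
noncomputable def multProjL : MvPolynomial (Fin N) F →ₗ[F] MvPolynomial (Fin N) F where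
  toFun := multProj
  map_add' P Q := by
    ext ν
    simp only [coeff_multProj, MvPolynomial.coeff_add]
    split <;> simp
  map_smul' c P := by
    ext ν
    simp only [coeff_multProj, MvPolynomial.coeff_smul, RingHom.id_apply]
    split <;> simp

lemma multProj_zero : multProj (0 : MvPolynomial (Fin N) F) = 0 :=
  map_zero (multProjL (F := F) (N := N))

lemma multProj_isHomogeneous {P : MvPolynomial (Fin N) F} {n : ℕ}
    (h : P.IsHomogeneous n) : (multProj P).IsHomogeneous n := by
  intro d hd
  rw [coeff_multProj] at hd
  apply h
  intro hc
  apply hd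
  split <;> simp [hc]

lemma pderiv_isHomogeneous (j : Fin N) {P : MvPolynomial (Fin N) F} {k : ℕ}
    (h : P.IsHomogeneous (k + 1)) : (MvPolynomial.pderiv j P).IsHomogeneous k := by
  classical
  rw [← P.support_sum_monomial_coeff, map_sum]
  apply MvPolynomial.IsHomogeneous.sum
  intro s hs
  rw [MvPolynomial.pderiv_monomial]
  by_cases hsj : s j = 0
  · simp only [hsj, Nat.cast_zero, mul_zero, map_zero]
    exact MvPolynomial.isHomogeneous_zero _ _ _
  · apply MvPolynomial.isHomogeneous_monomial
    have hdeg : s.degree = k + 1 := by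
      have := h (MvPolynomial.mem_support_iff.mp hs)
      rwa [Finsupp.degree_eq_weight_one]
    have hle : Finsupp.single j 1 ≤ s := by
      rw [Finsupp.single_le_iff]
      omega
    have hadd : s - Finsupp.single j 1 + Finsupp.single j 1 = s :=
      tsub_add_cancel_of_le hle
    have hdegadd := congrArg Finsupp.degree hadd
    have h1 : (Finsupp.single j (1 : ℕ)).degree = 1 := by
      rw [Finsupp.degree_single]
    rw [show (Finsupp.degree : (Fin N →₀ ℕ) →+ ℕ) = _ from Finsupp.degree_eq_weight_one,
      map_add] at hdegadd
    rw [show (Finsupp.degree : (Fin N →₀ ℕ) →+ ℕ) = _ from Finsupp.degree_eq_weight_one]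
      at h1 hdeg ⊢
    omega

lemma pderiv_eq_zero_of_isHomogeneous_zero (j : Fin N) {P : MvPolynomial (Fin N) F}
    (h : P.IsHomogeneous 0) : MvPolynomial.pderiv j P = 0 := by
  classical
  rw [← P.support_sum_monomial_coeff, map_sum]
  apply Finset.sum_eq_zero
  intro s hs
  have hdeg : s.degree = 0 := by
    have := h (MvPolynomial.mem_support_iff.mp hs)
    rwa [Finsupp.degree_eq_weight_one]
  have hs0 : s = 0 := by
    rwa [Finsupp.degree_eq_zero_iff] at hdeg
  rw [MvPolynomial.pderiv_monomial, hs0]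
  simp

/-- `e` maps polynomials homogeneous of degree `k + n` to polynomials
homogeneous of degree `k`, and kills polynomials homogeneous of degree `< n`. -/
def Drops (e : Module.End F (MvPolynomial (Fin N) F)) (n : ℕ) : Prop :=
  (∀ (k : ℕ) (P : MvPolynomial (Fin N) F), P.IsHomogeneous (k + n) →
    (e P).IsHomogeneous k) ∧
  (∀ (k : ℕ) (P : MvPolynomial (Fin N) F), P.IsHomogeneous k → k < n → e P = 0)

lemma drops_one : Drops (1 : Module.End F (MvPolynomial (Fin N) F)) 0 :=
  ⟨fun k P h => by simpa using h, fun k _ _ hk => absurd hk (Nat.not_lt_zero k)⟩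

lemma Drops.mul {e f : Module.End F (MvPolynomial (Fin N) F)} {a b : ℕ}
    (he : Drops e a) (hf : Drops f b) : Drops (e * f) (a + b) := by
  constructor
  · intro k P h
    rw [Module.End.mul_apply]
    exact he.1 k _ (hf.1 (k + a) P (by rwa [← add_assoc] at h))
  · intro k P h hk
    rw [Module.End.mul_apply]
    by_cases hb : k < b
    · rw [hf.2 k P h hb, map_zero]
    · push_neg at hb
      have h1 : (f P).IsHomogeneous (k - b) :=
        hf.1 (k - b) P (by rwa [Nat.sub_add_cancel hb])
      exact he.2 (k - b) _ h1 (by omega)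

lemma drops_pderiv (j : Fin N) :
    Drops ((MvPolynomial.pderiv j).toLinearMap : Module.End F (MvPolynomial (Fin N) F)) 1 := by
  constructor
  · intro k P h
    exact pderiv_isHomogeneous j h
  · intro k P h hk
    interval_cases k
    exact pderiv_eq_zero_of_isHomogeneous_zero j h

lemma Drops.pow {e : Module.End F (MvPolynomial (Fin N) F)} {a : ℕ}
    (he : Drops e a) (n : ℕ) : Drops (e ^ n) (n * a) := by
  induction n with
  | zero => simpa using drops_one
  | succ n ih =>
    rw [pow_succ, Nat.succ_mul]
    exact ih.mul he

lemma drops_list_prod {ι : Type*} (l : List ι)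
    (e : ι → Module.End F (MvPolynomial (Fin N) F)) (n : ι → ℕ)
    (h : ∀ i ∈ l, Drops (e i) (n i)) :
    Drops (l.map e).prod (l.map n).sum := by
  induction l with
  | nil => simpa using drops_one
  | cons a t ih =>
    simp only [List.map_cons, List.prod_cons, List.sum_cons]
    exact (h a (by simp)).mul (ih fun i hi => h i (by simp [hi]))

lemma drops_monDeriv (μ : Fin N → ℕ) :
    Drops (monDeriv (F := F) μ) (∑ i, μ i) := by
  have h := drops_list_prod (List.finRange N)
    (fun i : Fin N => ((MvPolynomial.pderiv i).toLinearMap ^ (μ i))) μ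
    (fun i _ => by simpa using (drops_pderiv (F := F) i).pow (μ i))
  rw [← List.ofFn_eq_map, ← List.ofFn_eq_map, List.sum_ofFn] at h
  exact h

end Aux

section Key

variable {F : Type*} [CommSemiring F] {N : ℕ}

lemma key_component {i m r : ℕ} (hr : r ≤ i) {μ : Fin N → ℕ} (hμ : ∑ j, μ j = r)
    {S : Finset (Fin N)} (hS : S.card = m) {k : ℕ} {Q : MvPolynomial (Fin N) F}
    (hQ : Q.IsHomogeneous k) :
    MvPolynomial.homogeneousComponent (m + i - r)
        (multProj ((∏ j ∈ S, MvPolynomial.X j) * (monDeriv μ Q)))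
      = if k = i then multProj ((∏ j ∈ S, MvPolynomial.X j) * (monDeriv μ Q)) else 0 := by
  by_cases hkr : k < r
  · have h0 : monDeriv μ Q = 0 := (drops_monDeriv μ).2 k Q hQ (hμ ▸ hkr)
    have hki : k ≠ i := by omega
    rw [h0, mul_zero, multProj_zero, map_zero, if_neg hki]
  · push_neg at hkr
    have h1 : (monDeriv μ Q).IsHomogeneous (k - r) :=
      (drops_monDeriv μ).1 (k - r) Q (by rw [hμ, Nat.sub_add_cancel hkr]; exact hQ)
    have hX : (∏ j ∈ S, (MvPolynomial.X j : MvPolynomial (Fin N) F)).IsHomogeneous m := by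
      have := MvPolynomial.IsHomogeneous.prod S
        (fun j => (MvPolynomial.X j : MvPolynomial (Fin N) F)) (fun _ => 1)
        (fun j _ => MvPolynomial.isHomogeneous_X F j)
      simpa [hS] using this
    have h2 : (multProj ((∏ j ∈ S, MvPolynomial.X j) * (monDeriv μ Q))).IsHomogeneous
        (m + (k - r)) := multProj_isHomogeneous (hX.mul h1)
    rw [MvPolynomial.homogeneousComponent_of_mem
      ((MvPolynomial.mem_homogeneousSubmodule _ _).mpr h2)]
    by_cases hki : k = i
    · subst hki
      rw [if_pos (by omega), if_pos rfl]
    · rw [if_neg (by omega), if_neg hki]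

end Key

/-- If all monomials in `M` have degree exactly `r`, then the projected shifted
partial derivative measure of `P` dominates that of each of its homogeneous
components. -/
theorem phiMeasure_homogeneousComponent_le {F : Type*} [Field F] {N : ℕ}
    (M : Finset (Fin N → ℕ)) (m r d : ℕ) (hm : 0 < m)
    (hM : ∀ μ ∈ M, ∑ i, μ i = r)
    (P : MvPolynomial (Fin N) F) (hP : P.totalDegree ≤ d) :
    ∀ i ≤ d, phiMeasure M m (MvPolynomial.homogeneousComponent i P) ≤
      phiMeasure M m P := by
  classical
  intro i hi
  set A : Set (MvPolynomial (Fin N) F) :=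
    { g | ∃ μ ∈ M, ∃ S : Finset (Fin N), S.card = m ∧
        g = multProj ((∏ j ∈ S, MvPolynomial.X j) * (monDeriv μ P)) } with hA
  set B : Set (MvPolynomial (Fin N) F) :=
    { g | ∃ μ ∈ M, ∃ S : Finset (Fin N), S.card = m ∧
        g = multProj ((∏ j ∈ S, MvPolynomial.X j) *
          (monDeriv μ (MvPolynomial.homogeneousComponent i P))) } with hB
  by_cases hir : i < r
  · -- every generator for the homogeneous component vanishes
    have hspan : Submodule.span F B = ⊥ := by
      rw [Submodule.span_eq_bot]
      rintro g ⟨μ, hμ, S, hS, rfl⟩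
      have h0 : monDeriv μ (MvPolynomial.homogeneousComponent i P) = 0 :=
        (drops_monDeriv μ).2 i _ (MvPolynomial.homogeneousComponent_isHomogeneous i P)
          (by rw [hM μ hμ]; exact hir)
      rw [h0, mul_zero, multProj_zero]
    show Module.finrank F ↥(Submodule.span F B) ≤ _
    rw [hspan]
    simp
  · push_neg at hir
    -- the ambient span is finite dimensional
    have hAfin : A.Finite := by
      apply Set.Finite.subset (Set.finite_range
        (fun p : {μ // μ ∈ M} × Finset (Fin N) =>
          multProj ((∏ j ∈ p.2, MvPolynomial.X j) * (monDeriv (p.1 : Fin N → ℕ) P))))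
      rintro g ⟨μ, hμ, S, hS, rfl⟩
      exact ⟨(⟨μ, hμ⟩, S), rfl⟩
    haveI : Module.Finite F ↥(Submodule.span F A) :=
      FiniteDimensional.span_of_finite F hAfin
    set f := (MvPolynomial.homogeneousComponent (m + i - r) :
      MvPolynomial (Fin N) F →ₗ[F] MvPolynomial (Fin N) F) with hf
    -- each generator for the component is `f` of a generator for `P`
    have hgen : ∀ μ ∈ M, ∀ S : Finset (Fin N), S.card = m →
        multProj ((∏ j ∈ S, MvPolynomial.X j) *
          (monDeriv μ (MvPolynomial.homogeneousComponent i P)))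
        = f (multProj ((∏ j ∈ S, MvPolynomial.X j) * (monDeriv μ P))) := by
      intro μ hμ S hS
      have hPsum : ∑ k ∈ Finset.range (d + 1),
            MvPolynomial.homogeneousComponent k P = P := by
          calc ∑ k ∈ Finset.range (d + 1), MvPolynomial.homogeneousComponent k P
              = ∑ k ∈ Finset.range (P.totalDegree + 1),
                  MvPolynomial.homogeneousComponent k P := by
                symm
                apply Finset.sum_subset
                · intro x hx
                  simp only [Finset.mem_range] at hx ⊢
                  omega
                · intro x _ hx
                  simp only [Finset.mem_range, not_lt] at hx
                  exact MvPolynomial.homogeneousComponent_eq_zero x P (by omega)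
            _ = P := MvPolynomial.sum_homogeneousComponent P
      conv_rhs => rw [← hPsum]
      rw [map_sum, Finset.mul_sum]
      have : multProj (∑ k ∈ Finset.range (d + 1),
          (∏ j ∈ S, MvPolynomial.X j) *
            (monDeriv μ (MvPolynomial.homogeneousComponent k P)))
          = ∑ k ∈ Finset.range (d + 1), multProj ((∏ j ∈ S, MvPolynomial.X j) *
            (monDeriv μ (MvPolynomial.homogeneousComponent k P))) :=
        map_sum (multProjL (F := F) (N := N)) _ _
      rw [this, map_sum]
      have heach : ∀ k ∈ Finset.range (d + 1),
          f (multProj ((∏ j ∈ S, MvPolynomial.X j) *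
            (monDeriv μ (MvPolynomial.homogeneousComponent k P))))
          = if k = i then multProj ((∏ j ∈ S, MvPolynomial.X j) *
            (monDeriv μ (MvPolynomial.homogeneousComponent k P))) else 0 := by
        intro k _
        exact key_component hir (hM μ hμ) hS
          (MvPolynomial.homogeneousComponent_isHomogeneous k P)
      rw [Finset.sum_congr rfl heach, Finset.sum_ite_eq' (Finset.range (d + 1)) i,
        if_pos (Finset.mem_range.mpr (by omega))]
    -- span of B is inside the image of span of A under f
    have hle : Submodule.span F B ≤ (Submodule.span F A).map f := by
      rw [Submodule.span_le]
      rintro g ⟨μ, hμ, S, hS, rfl⟩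
      refine ⟨multProj ((∏ j ∈ S, MvPolynomial.X j) * (monDeriv μ P)), ?_, ?_⟩
      · exact Submodule.subset_span ⟨μ, hμ, S, hS, rfl⟩
      · exact (hgen μ hμ S hS).symm
    calc Module.finrank F ↥(Submodule.span F B)
        ≤ Module.finrank F ↥((Submodule.span F A).map f) := Submodule.finrank_mono hle
      _ ≤ Module.finrank F ↥(Submodule.span F A) := Submodule.finrank_map_le f _
end
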